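/- Let Γ be a torsion-free abelian group, E a Γ-graded division algebra with center T, Λ = (Γ_E/Γ_T) ∧ (Γ_E/Γ_T) the exterior square of the finite abelian group Γ_E/Γ_T, and e the exponent of Λ. If n ≡ n' (mod e) for positive integers n, n', then [E*,E*]ⁿ·[E*,E₀*] = [E*,E*]^{n'}·[E*,E₀*]; in particular the group [E*,E*]/([E*,E*]ⁿ·[E*,E₀*]) depends only on the congruence class of n modulo e. -/

import Mathlib

set_option maxHeartbeats 1000000
set_option synthInstance.maxHeartbeats 400000

theorem exists_max_cone {Γ : Type*} [AddCommGroup Γ]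
    (htf : ∀ (γ : Γ) (m : ℕ), m ≠ 0 → m • γ = 0 → γ = 0) :
    ∃ C : AddSubmonoid Γ, (∀ a : Γ, a ∈ C ∨ -a ∈ C) ∧ ∀ a ∈ C, -a ∈ C → a = 0 := by
  classical
  set S : Set (Set Γ) := {s | (0:Γ) ∈ s ∧ (∀ x ∈ s, ∀ y ∈ s, x + y ∈ s) ∧
    ∀ x ∈ s, -x ∈ s → x = 0} with hS
  have hub : ∀ c ⊆ S, IsChain (· ⊆ ·) c → c.Nonempty → ∃ ub ∈ S, ∀ s ∈ c, s ⊆ ub := by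
    rintro c hcS hchain ⟨s₀, hs₀⟩
    refine ⟨⋃₀ c, ⟨⟨s₀, hs₀, (hcS hs₀).1⟩, ?_, ?_⟩, fun s hs => Set.subset_sUnion_of_mem hs⟩
    · rintro x ⟨s, hs, hx⟩ y ⟨t, ht, hy⟩
      rcases hchain.total hs ht with h | h
      · exact ⟨t, ht, (hcS ht).2.1 x (h hx) y hy⟩
      · exact ⟨s, hs, (hcS hs).2.1 x hx y (h hy)⟩
    · rintro x ⟨s, hs, hx⟩ ⟨t, ht, hx'⟩
      rcases hchain.total hs ht with h | h
      · exact (hcS ht).2.2 x (h hx) hx'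
      · exact (hcS hs).2.2 x hx (h hx')
  have h00 : ({0} : Set Γ) ∈ S := by refine ⟨rfl, ?_, ?_⟩ <;> simp +contextual
  obtain ⟨M, hM0, hMmax⟩ := zorn_subset_nonempty S hub ({0} : Set Γ) h00
  obtain ⟨h0M, haddM, hconeM⟩ := hMmax.1
  -- nsmul closure
  have hsmul : ∀ (n : ℕ) (x : Γ), x ∈ M → n • x ∈ M := by
    intro n x hx
    induction n with
    | zero => simpa using h0M
    | succ k ih => rw [succ_nsmul]; exact haddM _ ih _ hx
  -- key: maximality
  have key : ∀ a : Γ, a ∉ M → ∃ n : ℕ, n ≠ 0 ∧ ∃ c ∈ M, n • a + c = 0 := by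
    intro a ha
    set M' : Set Γ := {x | ∃ c ∈ M, ∃ n : ℕ, x = n • a + c} with hM'
    have hMM' : M ⊆ M' := fun x hx => ⟨x, hx, 0, by simp⟩
    have haM' : a ∈ M' := ⟨0, h0M, 1, by simp⟩
    have h0' : (0:Γ) ∈ M' := hMM' h0M
    have hadd' : ∀ x ∈ M', ∀ y ∈ M', x + y ∈ M' := by
      rintro x ⟨c, hc, n, rfl⟩ y ⟨d, hd, m, rfl⟩
      exact ⟨c + d, haddM _ hc _ hd, n + m, by rw [add_smul]; abel⟩
    by_cases hcone' : ∀ x ∈ M', -x ∈ M' → x = 0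
    · have : M' ∈ S := ⟨h0', hadd', hcone'⟩
      have := hMmax.2 this hMM' -- M' ⊆ M ?
      exact absurd (this haM') ha
    push_neg at hcone'
    obtain ⟨x, ⟨c₁, hc₁, n₁, rfl⟩, ⟨c₂, hc₂, n₂, hx2⟩, hxne⟩ := hcone'
    have hsum : (n₁ + n₂) • a + (c₁ + c₂) = 0 := by
      have : -(n₁ • a + c₁) = n₂ • a + c₂ := hx2
      rw [add_smul]
      have := congrArg (fun z => (n₁ • a + c₁) + z) this
      simpa [add_comm, add_left_comm, add_assoc] using this.symm
    refine ⟨n₁ + n₂, ?_, c₁ + c₂, haddM _ hc₁ _ hc₂, hsum⟩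
    rintro h
    obtain ⟨h1, h2⟩ := Nat.add_eq_zero.mp h
    subst h1; subst h2
    simp only [zero_smul, zero_add] at hsum hx2 hxne
    exact hxne (hconeM _ hc₁ (by rw [hx2]; exact hc₂))
  -- conclude
  refine ⟨{ carrier := M, zero_mem' := h0M, add_mem' := fun hx hy => haddM _ hx _ hy }, ?_, ?_⟩
  · intro a
    by_contra h
    push_neg at h
    obtain ⟨ha, hna⟩ := h
    obtain ⟨n, hn, c, hc, hnc⟩ := key a ha
    obtain ⟨m, hm, d, hd, hmd⟩ := key (-a) hna
    -- n•a = -c, m•(-a) = -d  => m•a = d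
    have h1 : n • a = -c := by linear_combination (norm := abel) hnc
    have h2 : m • a = d := by
      have : m • (-a) = -d := by linear_combination (norm := abel) hmd
      simpa [smul_neg, neg_eq_iff_eq_neg] using this
    have h3 : n • d + m • c = 0 := by
      have e1 : (m * n) • a = -(m • c) := by rw [mul_smul, h1, smul_neg]
      have e2 : (n * m) • a = n • d := by rw [mul_smul, h2]
      rw [← e2, mul_comm n m, e1]; abel
    have hnd : n • d ∈ M := hsmul _ _ hd
    have hmc : m • c ∈ M := hsmul _ _ hc
    have : n • d = 0 := hconeM _ hnd (by rw [neg_eq_of_add_eq_zero_right h3]; exact hmc)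
    have hd0 : d = 0 := htf _ _ hn this
    have : a = 0 := by
      have := htf a m hm (by rw [h2, hd0])
      exact this
    exact ha (this ▸ h0M)
  · exact fun a ha hna => hconeM a ha hna


theorem units_homogeneous {Γ E : Type*} [AddCommGroup Γ] [LinearOrder Γ] [IsOrderedAddMonoid Γ]
    [DecidableEq Γ]
    [Ring E] [Nontrivial E] (𝒜 : Γ → AddSubgroup E) [GradedRing 𝒜]
    (hdiv : ∀ (γ : Γ) (x : E), x ∈ 𝒜 γ → x ≠ 0 → IsUnit x)
    (u : Eˣ) : ∃ γ, (u : E) ∈ 𝒜 γ := by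
  classical
  have hmulne : ∀ {γ : Γ} {a b : E}, a ∈ 𝒜 γ → a ≠ 0 → b ≠ 0 → a * b ≠ 0 := by
    intro γ a b ha ha0 hb0 h
    obtain ⟨w, hw⟩ := hdiv γ a ha ha0
    apply hb0
    calc b = ↑w⁻¹ * (a * b) := by rw [← hw]; rw [← mul_assoc]; simp
    _ = 0 := by rw [h, mul_zero]
  have hne : ∀ {x : E}, x ≠ 0 → (DirectSum.decompose 𝒜 x).support.Nonempty := by
    intro x hx
    rw [Finset.nonempty_iff_ne_empty]
    intro h
    apply hx
    have h2 : DirectSum.decompose 𝒜 x = 0 := DFinsupp.support_eq_empty.mp h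
    have h3 : DirectSum.decompose 𝒜 (0 : E) = 0 := DirectSum.decompose_zero 𝒜
    exact (DirectSum.decompose 𝒜).injective (h2.trans h3.symm)
  have key : ∀ (R : Γ → Γ → Prop), (∀ a b c, R a b → R b c → R a c) →
      (∀ a b, R a b → R b a → a = b) →
      (∀ a b c, R a b → R (c+a) (c+b)) → (∀ a b c, R (c+a) (c+b) → R a b) →
      ∀ (x y : E) (Mx My : Γ),
      (∀ γ ∈ (DirectSum.decompose 𝒜 x).support, R γ Mx) →
      Mx ∈ (DirectSum.decompose 𝒜 x).support →
      (∀ δ ∈ (DirectSum.decompose 𝒜 y).support, R δ My) →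
      My ∈ (DirectSum.decompose 𝒜 y).support →
      Mx + My ∈ (DirectSum.decompose 𝒜 (x*y)).support ∧
        ∀ γ ∈ (DirectSum.decompose 𝒜 (x*y)).support, R γ (Mx + My) := by
    intro R htrans hanti hmono hcancel x y Mx My hbx hMx hby hMy
    have hpair : ∀ i j, i ∈ (DirectSum.decompose 𝒜 x).support →
        j ∈ (DirectSum.decompose 𝒜 y).support → i + j = Mx + My → i = Mx ∧ j = My := by
      intro i j hi hj hij
      have h1 : R (i + j) (i + My) := hmono _ _ _ (hby j hj)
      rw [hij] at h1
      have h2 : R (My + Mx) (My + i) := by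
        rw [add_comm Mx My, add_comm i My] at h1; exact h1
      have h3 : R Mx i := hcancel _ _ _ h2
      have hi' : i = Mx := hanti _ _ (hbx i hi) h3
      subst hi'
      exact ⟨rfl, by exact add_left_cancel hij⟩
    have happ : ∀ n : Γ, ((DirectSum.decompose 𝒜 (x*y)) n : E) =
        ∑ ij ∈ (((DirectSum.decompose 𝒜 x).support ×ˢ
            (DirectSum.decompose 𝒜 y).support).filter fun ij : Γ × Γ => ij.1 + ij.2 = n),
          ((DirectSum.decompose 𝒜 x) ij.1 * (DirectSum.decompose 𝒜 y) ij.2 : E) := by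
      intro n
      rw [DirectSum.decompose_mul, DirectSum.coe_mul_apply]
    constructor
    · have hfilter : (((DirectSum.decompose 𝒜 x).support ×ˢ
          (DirectSum.decompose 𝒜 y).support).filter fun ij : Γ × Γ => ij.1 + ij.2 = Mx + My)
          = {(Mx, My)} := by
        apply Finset.ext
        rintro ⟨i, j⟩
        simp only [Finset.mem_filter, Finset.mem_product, Finset.mem_singleton, Prod.mk.injEq]
        constructor
        · rintro ⟨⟨hi, hj⟩, hij⟩; exact hpair i j hi hj hij
        · rintro ⟨rfl, rfl⟩; exact ⟨⟨hMx, hMy⟩, rfl⟩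
      rw [DFinsupp.mem_support_iff]
      intro h0
      have h4 := happ (Mx + My)
      rw [hfilter, Finset.sum_singleton, h0] at h4
      exact hmulne (SetLike.coe_mem ((DirectSum.decompose 𝒜 x) Mx))
        (by simpa using DFinsupp.mem_support_iff.mp hMx)
        (by simpa using DFinsupp.mem_support_iff.mp hMy) h4.symm
    · intro γ hγ
      rw [DFinsupp.mem_support_iff] at hγ
      have h4 := happ γ
      have hnonempty : (((DirectSum.decompose 𝒜 x).support ×ˢ
          (DirectSum.decompose 𝒜 y).support).filter fun ij : Γ × Γ => ij.1 + ij.2 = γ).Nonempty := by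
        rw [Finset.nonempty_iff_ne_empty]
        intro hemp
        rw [hemp, Finset.sum_empty] at h4
        exact hγ (by ext; simpa using h4)
      obtain ⟨⟨i, j⟩, hij⟩ := hnonempty
      simp only [Finset.mem_filter, Finset.mem_product] at hij
      obtain ⟨⟨hi, hj⟩, hijγ⟩ := hij
      have h1 : R (i + j) (i + My) := hmono _ _ _ (hby j hj)
      have h2 : R (i + My) (Mx + My) := by
        have := hmono i Mx My (hbx i hi)
        rw [add_comm My i, add_comm My Mx] at this; exact this
      rw [hijγ] at h1
      exact htrans _ _ _ h1 h2
  -- now apply with u and u⁻¹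
  have hu0 : (u : E) ≠ 0 := Units.ne_zero u
  have hv0 : (↑u⁻¹ : E) ≠ 0 := Units.ne_zero _
  have hsu := hne hu0
  have hsv := hne hv0
  set Mu := ((DirectSum.decompose 𝒜 (u:E)).support).max' hsu with hMu
  set mu := ((DirectSum.decompose 𝒜 (u:E)).support).min' hsu with hmu
  set Mv := ((DirectSum.decompose 𝒜 (↑u⁻¹:E)).support).max' hsv with hMv
  set mv := ((DirectSum.decompose 𝒜 (↑u⁻¹:E)).support).min' hsv with hmv
  have hsupp1 : ∀ γ ∈ (DirectSum.decompose 𝒜 ((u:E) * ↑u⁻¹)).support, γ = 0 := by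
    intro γ hγ
    rw [Units.mul_inv] at hγ
    rw [DFinsupp.mem_support_iff] at hγ
    by_contra hγ0
    apply hγ
    have h1m : (1:E) ∈ 𝒜 0 := SetLike.one_mem_graded 𝒜
    rw [DirectSum.decompose_of_mem 𝒜 h1m, DirectSum.of_eq_of_ne _ _ _ hγ0]
  obtain ⟨hmemM, _⟩ := key (· ≤ ·) (fun _ _ _ => le_trans) (fun _ _ => le_antisymm)
    (fun _ _ _ h => add_le_add_right h _) (fun _ _ _ h => le_of_add_le_add_left h)
    (u:E) (↑u⁻¹:E) Mu Mv (fun γ h => Finset.le_max' _ _ h) (Finset.max'_mem _ _)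
    (fun δ h => Finset.le_max' _ _ h) (Finset.max'_mem _ _)
  obtain ⟨hmemm, _⟩ := key (· ≥ ·) (fun _ _ _ h h' => le_trans h' h) (fun _ _ h h' => le_antisymm h' h)
    (fun _ _ _ h => add_le_add_right h _) (fun _ _ _ h => le_of_add_le_add_left h)
    (u:E) (↑u⁻¹:E) mu mv (fun γ h => Finset.min'_le _ _ h) (Finset.min'_mem _ _)
    (fun δ h => Finset.min'_le _ _ h) (Finset.min'_mem _ _)
  have eM : Mu + Mv = 0 := hsupp1 _ hmemM
  have em : mu + mv = 0 := hsupp1 _ hmemm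
  have hMm : Mu = mu := by
    by_contra h
    have hlt : mu < Mu := lt_of_le_of_ne (Finset.min'_le _ _ (Finset.max'_mem _ _)) (Ne.symm h)
    have hle : mv ≤ Mv := Finset.min'_le _ _ (Finset.max'_mem _ _)
    have : mu + mv < Mu + Mv := add_lt_add_of_lt_of_le hlt hle
    rw [eM, em] at this
    exact lt_irrefl _ this
  have hsingle : (DirectSum.decompose 𝒜 (u:E)).support = {mu} := by
    apply Finset.ext
    intro γ
    simp only [Finset.mem_singleton]
    constructor
    · intro hγ
      exact le_antisymm (hMm ▸ Finset.le_max' _ _ hγ) (Finset.min'_le _ _ hγ)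
    · rintro rfl; exact Finset.min'_mem _ _
  refine ⟨mu, ?_⟩
  have hsum := DirectSum.sum_support_decompose 𝒜 ((u:E))
  rw [hsingle, Finset.sum_singleton] at hsum
  exact hsum ▸ SetLike.coe_mem _


section AuxC
variable {M N : Type*} [AddCommGroup M] [AddCommGroup N]

def mkBilin2 (f : M →ₗ[ℤ] M →ₗ[ℤ] N) : MultilinearMap ℤ (fun _ : Fin 2 => M) N where
  toFun v := f (v 0) (v 1)
  map_update_add' m i x y := by
    fin_cases i <;> simp [Function.update_apply, Fin.ext_iff]
  map_update_smul' m i c x := by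
    fin_cases i <;> simp [Function.update_apply, Fin.ext_iff]

def mkAlt2 (f : M →ₗ[ℤ] M →ₗ[ℤ] N) (halt : ∀ x, f x x = 0) : M [⋀^Fin 2]→ₗ[ℤ] N :=
  { mkBilin2 f with
    map_eq_zero_of_eq' := by
      intro v i j hij hne
      have h01 : v 0 = v 1 := by
        fin_cases i <;> fin_cases j <;> simp_all
      show f (v 0) (v 1) = 0
      rw [h01]; exact halt _ }

theorem exponent_smul_bilin (f : M →ₗ[ℤ] M →ₗ[ℤ] N) (halt : ∀ x, f x x = 0) (a b : M) :
    (AddMonoid.exponent ↥(⋀[ℤ]^2 M)) • (f a b) = 0 := by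
  classical
  set e := AddMonoid.exponent ↥(⋀[ℤ]^2 M) with he
  have hmem : ExteriorAlgebra.ι ℤ a * ExteriorAlgebra.ι ℤ b ∈ ⋀[ℤ]^2 M := by
    show _ ∈ LinearMap.range (ExteriorAlgebra.ι ℤ : M →ₗ[ℤ] ExteriorAlgebra ℤ M) ^ 2
    rw [pow_two]
    exact Submodule.mul_mem_mul (LinearMap.mem_range_self _ a) (LinearMap.mem_range_self _ b)
  have hexp : e • (⟨_, hmem⟩ : ↥(⋀[ℤ]^2 M)) = 0 := AddMonoid.exponent_nsmul_eq_zero _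
  have hexp' : e • (ExteriorAlgebra.ι ℤ a * ExteriorAlgebra.ι ℤ b) = 0 :=
    congrArg Subtype.val hexp
  set F : ∀ i : ℕ, M [⋀^Fin i]→ₗ[ℤ] N :=
    fun i => match i with
      | 2 => mkAlt2 f halt
      | _ => 0 with hF
  have h2 := congrArg (ExteriorAlgebra.liftAlternating F) hexp'
  rw [map_nsmul, map_zero] at h2
  rw [ExteriorAlgebra.liftAlternating_ι_mul, ExteriorAlgebra.liftAlternating_ι] at h2
  simpa [hF, mkAlt2, mkBilin2] using h2

end AuxC

open scoped commutatorElement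
open scoped IsMulCommutative

theorem commutator_pow_exponent_mem {Γ E : Type*}
    [AddCommGroup Γ] [DecidableEq Γ] [Ring E] [Nontrivial E]
    (𝒜 : Γ → AddSubgroup E) [GradedRing 𝒜]
    (hdiv : ∀ (γ : Γ) (x : E), x ∈ 𝒜 γ → x ≠ 0 → IsUnit x)
    (hhom : ∀ u : Eˣ, ∃ γ, (u : E) ∈ 𝒜 γ)
    (GammaE GammaT : AddSubgroup Γ)
    (hGE : ∀ γ : Γ, γ ∈ GammaE ↔ ∃ x : E, x ≠ 0 ∧ x ∈ 𝒜 γ)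
    (hGT : ∀ γ : Γ, γ ∈ GammaT ↔ ∃ x : E, x ≠ 0 ∧ x ∈ 𝒜 γ ∧ x ∈ Set.center E)
    (hTE : GammaT ≤ GammaE)
    (E0u : Subgroup Eˣ) (hE0u : ∀ u : Eˣ, u ∈ E0u ↔ u.val ∈ 𝒜 (0 : Γ)) :
    ∀ x : Eˣ, x ∈ commutator Eˣ →
      x ^ (AddMonoid.exponent ↥(⋀[ℤ]^2 (↥GammaE ⧸ GammaT.addSubgroupOf GammaE))) ∈
        ⁅(⊤ : Subgroup Eˣ), E0u⁆ := by
  classical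
  set e := AddMonoid.exponent ↥(⋀[ℤ]^2 (↥GammaE ⧸ GammaT.addSubgroupOf GammaE)) with he
  choose d hd using hhom
  have huniq : ∀ (u : Eˣ) (γ : Γ), (u : E) ∈ 𝒜 γ → d u = γ := fun u γ h =>
    DirectSum.degree_eq_of_mem_mem 𝒜 (hd u) h (Units.ne_zero u)
  have hdmul : ∀ u v : Eˣ, d (u * v) = d u + d v := fun u v =>
    huniq _ _ (SetLike.mul_mem_graded (hd u) (hd v))
  have hd1 : d 1 = (0 : Γ) := huniq _ _ (SetLike.one_mem_graded 𝒜)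
  have hdinv : ∀ u : Eˣ, d u⁻¹ = - d u := by
    intro u
    have h := hdmul u u⁻¹
    rw [mul_inv_cancel, hd1] at h
    exact (neg_eq_of_add_eq_zero_right h.symm).symm
  have hdu0 : ∀ u : Eˣ, u ∈ E0u ↔ d u = 0 := by
    intro u
    constructor
    · intro h; exact huniq _ _ ((hE0u u).mp h)
    · intro h; exact (hE0u u).mpr (h ▸ hd u)
  -- E0u is normal
  let D : Eˣ →* Multiplicative Γ :=
    { toFun := fun u => Multiplicative.ofAdd (d u),
      map_one' := congrArg Multiplicative.ofAdd hd1,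
      map_mul' := fun u v => congrArg Multiplicative.ofAdd (hdmul u v) }
  have hker : E0u = D.ker := by
    ext u
    rw [MonoidHom.mem_ker, hdu0 u]
    constructor
    · intro h; exact congrArg Multiplicative.ofAdd h
    · intro h; exact congrArg Multiplicative.toAdd h
  haveI hE0n : E0u.Normal := hker ▸ D.normal_ker
  set K := ⁅(⊤ : Subgroup Eˣ), E0u⁆ with hK
  haveI : K.Normal := Subgroup.commutator_normal ⊤ E0u
  set π : Eˣ →* Eˣ ⧸ K := QuotientGroup.mk' K with hπ
  have hπ1 : ∀ x : Eˣ, π x = 1 ↔ x ∈ K := fun x => QuotientGroup.eq_one_iff x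
  have hK1 : ∀ a b : Eˣ, b ∈ E0u → π ⁅a, b⁆ = 1 := fun a b hb =>
    (hπ1 _).mpr (Subgroup.commutator_mem_commutator (Subgroup.mem_top a) hb)
  have hcentral : ∀ b : Eˣ, b ∈ E0u → π b ∈ Subgroup.center (Eˣ ⧸ K) := by
    intro b hb
    rw [Subgroup.mem_center_iff]
    intro g
    obtain ⟨a, rfl⟩ := QuotientGroup.mk'_surjective K g
    have h := hK1 a b hb
    rw [map_commutatorElement] at h
    exact commutatorElement_eq_one_iff_mul_comm.mp h
  have hcommle : commutator Eˣ ≤ E0u := by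
    rw [commutator_def, Subgroup.commutator_le]
    intro a _ b _
    rw [hdu0, commutatorElement_def, hdmul, hdmul, hdmul, hdinv, hdinv]
    abel
  set cc : Eˣ → Eˣ → Eˣ ⧸ K := fun a b => π ⁅a, b⁆ with hcc
  have hccZ : ∀ a b : Eˣ, cc a b ∈ Subgroup.center (Eˣ ⧸ K) := by
    intro a b
    apply hcentral
    apply hcommle
    rw [commutator_def]
    exact Subgroup.commutator_mem_commutator (Subgroup.mem_top a) (Subgroup.mem_top b)
  have hmulr : ∀ a b b' : Eˣ, cc a (b * b') = cc a b * cc a b' := by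
    intro a b b'
    have hid : ⁅a, b * b'⁆ = ⁅a, b⁆ * (b * ⁅a, b'⁆ * b⁻¹) := by
      simp only [commutatorElement_def]; group
    show π ⁅a, b * b'⁆ = π ⁅a, b⁆ * π ⁅a, b'⁆
    rw [hid, map_mul, map_mul, map_mul, map_inv]
    congr 1
    have hz := Subgroup.mem_center_iff.mp (hccZ a b')
    rw [hz (π b), mul_inv_cancel_right]
  have hanti : ∀ a b : Eˣ, cc a b = (cc b a)⁻¹ := by
    intro a b
    show π ⁅a, b⁆ = (π ⁅b, a⁆)⁻¹
    rw [← map_inv, commutatorElement_inv]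
  have hmull : ∀ a a' b : Eˣ, cc (a * a') b = cc a b * cc a' b := by
    intro a a' b
    rw [hanti (a * a') b, hmulr b a a', mul_inv_rev, ← hanti a' b, ← hanti a b]
    exact (Subgroup.mem_center_iff.mp (hccZ a' b) _).symm
  have hvr : ∀ a b : Eˣ, b ∈ E0u → cc a b = 1 := fun a b hb => hK1 a b hb
  have hvl : ∀ a b : Eˣ, a ∈ E0u → cc a b = 1 := by
    intro a b ha
    rw [hanti, hvr b a ha, inv_one]
  have hvc : ∀ a b : Eˣ, (b : E) ∈ Set.center E → cc a b = 1 := by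
    intro a b hb
    have hab : a * b = b * a := by
      apply Units.ext
      exact ((Set.mem_center_iff.mp hb).comm (a : E)).symm
    show π ⁅a, b⁆ = 1
    rw [commutatorElement_eq_one_iff_mul_comm.mpr hab, map_one]
  have hdep : ∀ a a' b : Eˣ, d a = d a' → cc a b = cc a' b := by
    intro a a' b hda
    have hw : a⁻¹ * a' ∈ E0u := by
      rw [hdu0, hdmul, hdinv, hda]; abel
    have hx : a * (a⁻¹ * a') = a' := by group
    calc cc a b = cc a b * cc (a⁻¹ * a') b := by rw [hvl _ _ hw, mul_one]
    _ = cc (a * (a⁻¹ * a')) b := (hmull _ _ _).symm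
    _ = cc a' b := by rw [hx]
  have hdepr : ∀ a b b' : Eˣ, d b = d b' → cc a b = cc a b' := by
    intro a b b' hdb
    rw [hanti a b, hanti a b', hdep b b' a hdb]
  -- pick units of a given degree
  have hpick : ∀ γ : ↥GammaE, ∃ u : Eˣ, d u = (γ : Γ) := by
    rintro ⟨γ, hγ⟩
    obtain ⟨x, hx0, hxγ⟩ := (hGE γ).mp hγ
    obtain ⟨u, rfl⟩ := hdiv γ x hxγ hx0
    exact ⟨u, huniq u γ hxγ⟩
  choose pick hpickd using hpick
  -- B on the subtype
  set Z := Subgroup.center (Eˣ ⧸ K) with hZ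
  set B : ↥GammaE → ↥GammaE → ↥Z := fun γ δ => ⟨cc (pick γ) (pick δ), hccZ _ _⟩ with hB
  have hBr : ∀ γ δ δ' : ↥GammaE, B γ (δ + δ') = B γ δ * B γ δ' := by
    intro γ δ δ'
    apply Subtype.ext
    show cc (pick γ) (pick (δ + δ')) = cc (pick γ) (pick δ) * cc (pick γ) (pick δ')
    have h1 : d (pick (δ + δ')) = d (pick δ * pick δ') := by
      rw [hdmul, hpickd, hpickd, hpickd]; rfl
    rw [hdepr _ _ _ h1, hmulr]
  have hBl : ∀ γ γ' δ : ↥GammaE, B (γ + γ') δ = B γ δ * B γ' δ := by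
    intro γ γ' δ
    apply Subtype.ext
    show cc (pick (γ + γ')) (pick δ) = cc (pick γ) (pick δ) * cc (pick γ') (pick δ)
    have h1 : d (pick (γ + γ')) = d (pick γ * pick γ') := by
      rw [hdmul, hpickd, hpickd, hpickd]; rfl
    rw [hdep _ _ _ h1, hmull]
  have hBTl : ∀ γ : ↥GammaE, γ ∈ GammaT.addSubgroupOf GammaE → ∀ δ : ↥GammaE, B γ δ = 1 := by
    intro γ hγ δ
    apply Subtype.ext
    show cc (pick γ) (pick δ) = 1
    have hγT : (γ : Γ) ∈ GammaT := hγ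
    obtain ⟨x, hx0, hxγ, hxc⟩ := (hGT γ).mp hγT
    obtain ⟨z, rfl⟩ := hdiv _ x hxγ hx0
    have hdz : d (pick γ) = d z := by rw [hpickd, huniq z _ hxγ]
    rw [hdep _ _ _ hdz]
    rw [hanti, hvc _ _ hxc, inv_one]
  have hBTr : ∀ δ : ↥GammaE, δ ∈ GammaT.addSubgroupOf GammaE → ∀ γ : ↥GammaE, B γ δ = 1 := by
    intro δ hδ γ
    apply Subtype.ext
    show cc (pick γ) (pick δ) = 1
    have h1 : cc (pick δ) (pick γ) = 1 := congrArg Subtype.val (hBTl δ hδ γ)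
    rw [hanti, h1, inv_one]
  have hB0r : ∀ γ : ↥GammaE, B γ 0 = 1 := fun γ => hBTr 0 (zero_mem _) γ
  have hB0l : ∀ δ : ↥GammaE, B 0 δ = 1 := fun δ => hBTl 0 (zero_mem _) δ
  -- build the bilinear map on the quotient
  set Q := (↥GammaE ⧸ GammaT.addSubgroupOf GammaE) with hQ
  set M := Additive ↥Z with hM
  let f1 : ↥GammaE → (↥GammaE →+ M) := fun γ =>
    { toFun := fun δ => Additive.ofMul (B γ δ),
      map_zero' := congrArg Additive.ofMul (hB0r γ),
      map_add' := fun δ δ' => congrArg Additive.ofMul (hBr γ δ δ') }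
  let f2 : ↥GammaE → (Q →+ M) := fun γ =>
    QuotientAddGroup.lift _ (f1 γ) (fun δ hδ => congrArg Additive.ofMul (hBTr δ hδ γ))
  let f3 : ↥GammaE →+ (Q →+ M) :=
    { toFun := f2,
      map_zero' := by
        apply AddMonoidHom.ext
        intro q
        induction q using QuotientAddGroup.induction_on with
        | H δ => exact congrArg Additive.ofMul (hB0l δ)
      map_add' := by
        intro γ γ'
        apply AddMonoidHom.ext
        intro q
        induction q using QuotientAddGroup.induction_on with
        | H δ => exact congrArg Additive.ofMul (hBl γ γ' δ) }
  let f4 : Q →+ (Q →+ M) := QuotientAddGroup.lift _ f3 (by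
    intro γ hγ
    apply AddMonoidHom.ext
    intro q
    induction q using QuotientAddGroup.induction_on with
    | H δ => exact congrArg Additive.ofMul (hBTl γ hγ δ))
  let L : Q →ₗ[ℤ] Q →ₗ[ℤ] M :=
    { toFun := fun q => (f4 q).toIntLinearMap,
      map_add' := fun q r => by
        apply LinearMap.ext
        intro s
        show (f4 (q + r)) s = (f4 q) s + (f4 r) s
        rw [map_add]; rfl,
      map_smul' := fun z q => by
        apply LinearMap.ext
        intro s
        show (f4 (z • q)) s = z • ((f4 q) s)
        rw [map_zsmul]; rfl }
  have halt : ∀ q : Q, L q q = 0 := by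
    intro q
    induction q using QuotientAddGroup.induction_on with
    | H γ =>
      show Additive.ofMul (B γ γ) = 0
      have : B γ γ = 1 := by
        apply Subtype.ext
        show π ⁅pick γ, pick γ⁆ = 1
        rw [commutatorElement_self, map_one]
      rw [this]; rfl
  -- the exponent kills all values of cc
  have hpowcc : ∀ a b : Eˣ, (π ⁅a, b⁆) ^ e = 1 := by
    intro a b
    have hda : d a ∈ GammaE := (hGE (d a)).mpr ⟨(a : E), Units.ne_zero a, hd a⟩
    have hdb : d b ∈ GammaE := (hGE (d b)).mpr ⟨(b : E), Units.ne_zero b, hd b⟩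
    have h1 : cc a b = cc (pick ⟨d a, hda⟩) (pick ⟨d b, hdb⟩) := by
      have e1 : d a = d (pick ⟨d a, hda⟩) := (hpickd ⟨d a, hda⟩).symm
      have e2 : d b = d (pick ⟨d b, hdb⟩) := (hpickd ⟨d b, hdb⟩).symm
      rw [hdep _ _ _ e1, hdepr _ _ _ e2]
    have h2 := exponent_smul_bilin L halt
      (QuotientAddGroup.mk (⟨d a, hda⟩ : ↥GammaE)) (QuotientAddGroup.mk (⟨d b, hdb⟩ : ↥GammaE))
    rw [← he] at h2
    have h3 : (B ⟨d a, hda⟩ ⟨d b, hdb⟩) ^ e = 1 := h2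
    have h4 := congrArg Subtype.val h3
    rw [SubmonoidClass.coe_pow] at h4
    show (cc a b) ^ e = 1
    rw [h1]
    exact h4
  -- conclude
  intro x hx
  have hcle : commutator Eˣ ≤ Subgroup.comap π
      { carrier := {g : Eˣ ⧸ K | g ∈ Subgroup.center _ ∧ g ^ e = 1},
        one_mem' := ⟨Subgroup.one_mem _, one_pow e⟩,
        mul_mem' := by
          rintro a b ⟨haZ, ha⟩ ⟨hbZ, hb⟩
          refine ⟨Subgroup.mul_mem _ haZ hbZ, ?_⟩
          have hab : Commute a b := Subgroup.mem_center_iff.mp hbZ a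
          rw [hab.mul_pow, ha, hb, one_mul],
        inv_mem' := by
          rintro a ⟨haZ, ha⟩
          exact ⟨Subgroup.inv_mem _ haZ, by rw [inv_pow, ha, inv_one]⟩ } := by
    rw [commutator_def, Subgroup.commutator_le]
    intro a _ b _
    rw [Subgroup.mem_comap]
    exact ⟨hccZ a b, hpowcc a b⟩
  have hx2 := hcle hx
  rw [Subgroup.mem_comap] at hx2
  have hx3 : π (x ^ e) = 1 := by rw [map_pow]; exact hx2.2
  exact (hπ1 _).mp hx3


set_option maxHeartbeats 1000000

/-- let `Γ` be a torsion-free abelian group, `E` a `Γ`-graded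
division algebra with center `T`, `Λ = (Γ_E/Γ_T) ∧ (Γ_E/Γ_T)` the exterior square of
`Γ_E/Γ_T`, and `e` the exponent of `Λ`.  If `n ≡ n' (mod e)` for positive integers
`n, n'`, then `[E*, E*]ⁿ · [E*, E₀*] = [E*, E*]^{n'} · [E*, E₀*]`; in particular
`[E*, E*]/([E*, E*]ⁿ · [E*, E₀*])` depends only on `n mod e`. -/
theorem commutator_power_subgroup_depends_only_on_n_mod_e {Γ E : Type*}
    [AddCommGroup Γ] [DecidableEq Γ] [Ring E] [Nontrivial E]
    (𝒜 : Γ → AddSubgroup E) [GradedRing 𝒜]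
    (hdiv : ∀ (γ : Γ) (x : E), x ∈ 𝒜 γ → x ≠ 0 → IsUnit x)
    -- `Γ` is torsion-free
    (htf : ∀ (γ : Γ) (m : ℕ), m ≠ 0 → m • γ = 0 → γ = 0)
    -- `E` is a graded division *algebra*: finite-dimensional over its center
    (hfin : Module.Finite (Subring.center E) E)
    -- the grade groups `Γ_E` and `Γ_T` (`T = Z(E)`)
    (GammaE GammaT : AddSubgroup Γ)
    (hGE : ∀ γ : Γ, γ ∈ GammaE ↔ ∃ x : E, x ≠ 0 ∧ x ∈ 𝒜 γ)
    (hGT : ∀ γ : Γ, γ ∈ GammaT ↔ ∃ x : E, x ≠ 0 ∧ x ∈ 𝒜 γ ∧ x ∈ Set.center E)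
    (hTE : GammaT ≤ GammaE)
    -- `E₀*`, the group of units of the degree-zero component
    (E0u : Subgroup Eˣ) (hE0u : ∀ u : Eˣ, u ∈ E0u ↔ u.val ∈ 𝒜 (0 : Γ))
    -- `n ≡ n' (mod e)`, where `e` is the exponent of `Λ`
    (nn nn' : ℕ) (hn : 0 < nn) (hn' : 0 < nn')
    (hcong :
      nn % AddMonoid.exponent ↥(⋀[ℤ]^2 (↥GammaE ⧸ GammaT.addSubgroupOf GammaE)) =
      nn' % AddMonoid.exponent ↥(⋀[ℤ]^2 (↥GammaE ⧸ GammaT.addSubgroupOf GammaE))) :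
    Subgroup.closure ((fun y : Eˣ => y ^ nn) '' (commutator Eˣ : Set Eˣ)) ⊔
        ⁅(⊤ : Subgroup Eˣ), E0u⁆ =
      Subgroup.closure ((fun y : Eˣ => y ^ nn') '' (commutator Eˣ : Set Eˣ)) ⊔
        ⁅(⊤ : Subgroup Eˣ), E0u⁆ := by
  classical
  set e := AddMonoid.exponent ↥(⋀[ℤ]^2 (↥GammaE ⧸ GammaT.addSubgroupOf GammaE)) with he
  obtain ⟨C, hCmax, hCcone⟩ := exists_max_cone htf
  let cone : AddGroupCone Γ := { C with eq_zero_of_mem_of_neg_mem' := fun h h' => hCcone _ h h' }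
  haveI : HasMemOrNegMem cone := ⟨fun a => hCmax a⟩
  letI : LinearOrder Γ := LinearOrder.mkOfAddGroupCone cone
  haveI : IsOrderedAddMonoid Γ := IsOrderedAddMonoid.mkOfCone cone
  have hhom : ∀ u : Eˣ, ∃ γ, (u : E) ∈ 𝒜 γ := units_homogeneous 𝒜 hdiv
  have hkey := commutator_pow_exponent_mem 𝒜 hdiv hhom GammaE GammaT hGE hGT hTE E0u hE0u
  rw [← he] at hkey
  suffices h : ∀ n m : ℕ, n % e = m % e →
      Subgroup.closure ((fun y : Eˣ => y ^ n) '' (commutator Eˣ : Set Eˣ)) ⊔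
        ⁅(⊤ : Subgroup Eˣ), E0u⁆ ≤
      Subgroup.closure ((fun y : Eˣ => y ^ m) '' (commutator Eˣ : Set Eˣ)) ⊔
        ⁅(⊤ : Subgroup Eˣ), E0u⁆ by
    exact le_antisymm (h nn nn' hcong) (h nn' nn hcong.symm)
  intro n m hnm
  apply sup_le
  · rw [Subgroup.closure_le]
    rintro _ ⟨x, hx, rfl⟩
    have hxc : x ∈ commutator Eˣ := hx
    have hxe : x ^ e ∈ ⁅(⊤ : Subgroup Eˣ), E0u⁆ := hkey x hxc
    have hmod : Nat.ModEq e n m := hnm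
    obtain ⟨t, ht⟩ := hmod.dvd
    have hx1 : x ^ (n : ℤ) = x ^ (m : ℤ) * (x ^ (e : ℤ)) ^ (-t) := by
      rw [← zpow_mul, ← zpow_add]
      congr 1
      have h2 : (m : ℤ) - n = e * t := ht
      linarith
    show (fun y : Eˣ => y ^ n) x ∈ _
    have hx2 : ((fun y : Eˣ => y ^ n) x : Eˣ) = x ^ (n : ℤ) := (zpow_natCast x n).symm
    rw [hx2, hx1]
    apply mul_mem
    · have hxm : x ^ m ∈ Subgroup.closure ((fun y : Eˣ => y ^ m) '' (commutator Eˣ : Set Eˣ)) :=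
        Subgroup.subset_closure ⟨x, hx, rfl⟩
      rw [← zpow_natCast x m] at hxm
      exact SetLike.le_def.mp le_sup_left hxm
    · have hxe' : x ^ (e : ℤ) ∈ ⁅(⊤ : Subgroup Eˣ), E0u⁆ := by
        rw [zpow_natCast]; exact hxe
      exact SetLike.le_def.mp le_sup_right (Subgroup.zpow_mem _ hxe' (-t))
  · exact le_sup_right
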